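/- For n = 2 and c_1, c_2 > 0, let f(x) = (x + c_1 x - c_1 x^2)/(1 + (c_1+c_2)x - (c_1+c_2)x^2) be the one-dimensional reduction of the dynamics, and let x* = c_1/(c_1+c_2). Then f(x*) = x* and f'(x*) = (c_1 + c_2)/(c_1 + c_2 + c_1 c_2), which lies strictly between 0 and 1; hence x* is a locally asymptotically stable fixed point. -/

import Mathlib

theorem stmt15 (c₁ c₂ : ℝ) (hc₁ : 0 < c₁) (hc₂ : 0 < c₂) :
    let f : ℝ → ℝ := fun x =>
      (x + c₁ * x - c₁ * x ^ 2) / (1 + (c₁ + c₂) * x - (c₁ + c₂) * x ^ 2)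
    let x₀ := c₁ / (c₁ + c₂)
    f x₀ = x₀ ∧
      HasDerivAt f ((c₁ + c₂) / (c₁ + c₂ + c₁ * c₂)) x₀ ∧
      0 < (c₁ + c₂) / (c₁ + c₂ + c₁ * c₂) ∧
      (c₁ + c₂) / (c₁ + c₂ + c₁ * c₂) < 1 := by
  intro f x₀
  have hs : 0 < c₁ + c₂ := by linarith
  have hs' : c₁ + c₂ ≠ 0 := ne_of_gt hs
  have hD : 1 + (c₁ + c₂) * x₀ - (c₁ + c₂) * x₀ ^ 2 = (c₁ + c₂ + c₁ * c₂) / (c₁ + c₂) := by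
    show 1 + (c₁ + c₂) * (c₁ / (c₁ + c₂)) - (c₁ + c₂) * (c₁ / (c₁ + c₂)) ^ 2
        = (c₁ + c₂ + c₁ * c₂) / (c₁ + c₂)
    field_simp
    ring
  have hDpos : 0 < 1 + (c₁ + c₂) * x₀ - (c₁ + c₂) * x₀ ^ 2 := by
    rw [hD]; positivity
  have hDne := ne_of_gt hDpos
  refine ⟨?_, ?_, by positivity, ?_⟩
  · show (x₀ + c₁ * x₀ - c₁ * x₀ ^ 2) / (1 + (c₁ + c₂) * x₀ - (c₁ + c₂) * x₀ ^ 2) = x₀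
    rw [div_eq_iff hDne]
    show c₁ / (c₁ + c₂) + c₁ * (c₁ / (c₁ + c₂)) - c₁ * (c₁ / (c₁ + c₂)) ^ 2
        = c₁ / (c₁ + c₂) * (1 + (c₁ + c₂) * (c₁ / (c₁ + c₂)) - (c₁ + c₂) * (c₁ / (c₁ + c₂)) ^ 2)
    field_simp
  · have h1 : HasDerivAt (fun x : ℝ => x + c₁ * x - c₁ * x ^ 2)
        (1 + c₁ * 1 - c₁ * (2 * x₀)) x₀ := by
      have := ((hasDerivAt_id x₀).add ((hasDerivAt_id x₀).const_mul c₁)).sub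
        ((hasDerivAt_pow 2 x₀).const_mul c₁)
      exact this.congr_deriv (by norm_num)
    have h2 : HasDerivAt (fun x : ℝ => 1 + (c₁ + c₂) * x - (c₁ + c₂) * x ^ 2)
        (0 + (c₁ + c₂) * 1 - (c₁ + c₂) * (2 * x₀)) x₀ := by
      have := ((hasDerivAt_const x₀ (1:ℝ)).add ((hasDerivAt_id x₀).const_mul (c₁ + c₂))).sub
        ((hasDerivAt_pow 2 x₀).const_mul (c₁ + c₂))
      exact this.congr_deriv (by norm_num)
    have h := h1.div h2 hDne
    refine h.congr_deriv ?_
    symm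
    rw [hD]
    show (c₁ + c₂) / (c₁ + c₂ + c₁ * c₂) =
      ((1 + c₁ * 1 - c₁ * (2 * (c₁ / (c₁ + c₂)))) * ((c₁ + c₂ + c₁ * c₂) / (c₁ + c₂)) -
        (c₁ / (c₁ + c₂) + c₁ * (c₁ / (c₁ + c₂)) - c₁ * (c₁ / (c₁ + c₂)) ^ 2) *
          (0 + (c₁ + c₂) * 1 - (c₁ + c₂) * (2 * (c₁ / (c₁ + c₂))))) /
        ((c₁ + c₂ + c₁ * c₂) / (c₁ + c₂)) ^ 2
    have hq : (0:ℝ) < c₁ + c₂ + c₁ * c₂ := by positivity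
    field_simp
    ring
  · rw [div_lt_one (by positivity)]
    nlinarith
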